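/- Let L, S, V ∈ ℕ, let (F_s)_{s∈{0,...,S-1}} be functions defined on subsets of 2^{-L}ℤ^d ∩ [0,1)^d, each taking at most V values. Then for any nonempty 2^{-LS}-set A₀ ⊆ [0,1)^d there exists an (L,S)-uniform subset A ⊆ A₀ with |A| ≥ (2LVd)^{-S}|A₀| such that, for each s, the value F_s(A^I_L) is the same for all dyadic cubes I ∈ D_{sL} intersecting A. -/

import Mathlib

open Set Metric Pointwise

noncomputable section

/-- The half-open dyadic cube of side `2^{-k}` indexed by `j ∈ ℤ^d`. -/
def dyadicCube (d k : ℕ) (j : Fin d → ℤ) : Set (EuclideanSpace ℝ (Fin d)) :=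
  {x | ∀ i, (j i : ℝ) ≤ 2 ^ k * x i ∧ 2 ^ k * x i < j i + 1}

/-- Indices of dyadic cubes of side `2^{-k}` meeting `A`. -/
def covIdx (d k : ℕ) (A : Set (EuclideanSpace ℝ (Fin d))) : Set (Fin d → ℤ) :=
  {j | (A ∩ dyadicCube d k j).Nonempty}

/-- The dyadic covering number `|A|_{2^{-k}}`. -/
def covNum (d k : ℕ) (A : Set (EuclideanSpace ℝ (Fin d))) : ℕ :=
  (covIdx d k A).ncard

/-- The unit cube `[0,1)^d`. -/
def unitCube (d : ℕ) : Set (EuclideanSpace ℝ (Fin d)) := {x | ∀ i, 0 ≤ x i ∧ x i < 1}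

/-- A `2^{-m}`-set : a subset of `2^{-m}ℤ^d ∩ [0,1)^d`. -/
def IsDyadicSet (d m : ℕ) (A : Set (EuclideanSpace ℝ (Fin d))) : Prop :=
  A ⊆ unitCube d ∧ ∀ x ∈ A, ∀ i, ∃ n : ℤ, x i = n / 2 ^ m

/-- `(L,S)`-uniformity with branching numbers `R s`. -/
def IsUniform (d L S : ℕ) (R : ℕ → ℕ) (A : Set (EuclideanSpace ℝ (Fin d))) : Prop :=
  ∀ s < S, ∀ j ∈ covIdx d (s * L) A,
    covNum d ((s + 1) * L) (A ∩ dyadicCube d (s * L) j) = R s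

/-- The homothety mapping the dyadic cube of level `k` with index `j` onto `[0,1)^d`. -/
def renorm (d k : ℕ) (j : Fin d → ℤ) (y : EuclideanSpace ℝ (Fin d)) :
    EuclideanSpace ℝ (Fin d) := WithLp.toLp 2 (fun i => 2 ^ k * y i - j i)

/-- The `2^{-L}`-set associated to a set `B ⊆ [0,1)^d`: representatives `j/2^L` of
dyadic cubes of side `2^{-L}` meeting `B`. -/
def discretize (d L : ℕ) (B : Set (EuclideanSpace ℝ (Fin d))) :
    Set (EuclideanSpace ℝ (Fin d)) :=
  {x | ∃ j ∈ covIdx d L B, x = fun i => (j i : ℝ) / 2 ^ L}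



section Geometry

open Set

/-- coordinatewise floor at scale `2^{-k}` -/
def idxOf (d k : ℕ) (x : EuclideanSpace ℝ (Fin d)) : Fin d → ℤ :=
  fun i => ⌊(2:ℝ) ^ k * x i⌋

lemma mem_dyadicCube_iff {d k : ℕ} {j : Fin d → ℤ} {x : EuclideanSpace ℝ (Fin d)} :
    x ∈ dyadicCube d k j ↔ idxOf d k x = j := by
  constructor
  · intro h; funext i
    exact (Int.floor_eq_iff (R := ℝ) (a := (2:ℝ) ^ k * x i)).2 ⟨(h i).1, (h i).2⟩
  · rintro rfl i
    have := Int.lt_floor_add_one ((2:ℝ)^k * x i)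
    exact ⟨Int.floor_le _, by push_cast; push_cast at this; exact this⟩

lemma dyadicCube_eq_fiber (d k : ℕ) (j : Fin d → ℤ) :
    dyadicCube d k j = idxOf d k ⁻¹' {j} := by
  ext x; simp [mem_dyadicCube_iff]

lemma covIdx_eq_image (d k : ℕ) (A : Set (EuclideanSpace ℝ (Fin d))) :
    covIdx d k A = idxOf d k '' A := by
  ext j
  simp only [covIdx, mem_setOf_eq, mem_image]
  constructor
  · rintro ⟨x, hxA, hx⟩; exact ⟨x, hxA, mem_dyadicCube_iff.1 hx⟩
  · rintro ⟨x, hxA, hx⟩; exact ⟨x, hxA, mem_dyadicCube_iff.2 hx⟩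

lemma inter_cube (d k : ℕ) (A : Set (EuclideanSpace ℝ (Fin d))) (j : Fin d → ℤ) :
    A ∩ dyadicCube d k j = A ∩ idxOf d k ⁻¹' {j} := by
  rw [dyadicCube_eq_fiber]

lemma covNum_eq (d k : ℕ) (A : Set (EuclideanSpace ℝ (Fin d))) :
    covNum d k A = (idxOf d k '' A).ncard := by
  rw [covNum, covIdx_eq_image]

lemma mem_covIdx {d k : ℕ} {A : Set (EuclideanSpace ℝ (Fin d))} {j : Fin d → ℤ} :
    j ∈ covIdx d k A ↔ (A ∩ idxOf d k ⁻¹' {j}).Nonempty := by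
  rw [covIdx, mem_setOf_eq, inter_cube]

/-- floor of floor div -/
lemma floor_floor_div (r : ℝ) (L : ℕ) :
    ⌊(⌊r⌋ : ℝ) / 2 ^ L⌋ = ⌊r / 2 ^ L⌋ := by
  have hn : (0:ℝ) < 2 ^ L := by positivity
  set q := ⌊(⌊r⌋ : ℝ) / 2 ^ L⌋ with hq
  symm
  apply Int.floor_eq_iff.2
  constructor
  · calc (q:ℝ) ≤ (⌊r⌋ : ℝ) / 2 ^ L := Int.floor_le _
      _ ≤ r / 2 ^ L := by gcongr; exact Int.floor_le r
  · by_contra h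
    push_neg at h
    have h1 : ((q+1 : ℤ) : ℝ) * 2 ^ L ≤ r := by
      push_cast
      calc ((q:ℝ)+1) * 2^L = (q+1) * 2^L := by ring
        _ ≤ r := by rw [← le_div_iff₀ hn]; linarith
    have h2 : ((q+1:ℤ) : ℝ) * 2^L ≤ (⌊r⌋ : ℝ) := by
      have : ((q+1:ℤ) * 2^L : ℤ) ≤ ⌊r⌋ := Int.le_floor.2 (by push_cast at h1 ⊢; linarith)
      exact_mod_cast this
    have h3 : (⌊r⌋:ℝ)/2^L < q + 1 := Int.lt_floor_add_one _
    rw [div_lt_iff₀ hn] at h3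
    push_cast at h2 h3
    linarith

/-- parent index -/
def paIdx (d L : ℕ) (j : Fin d → ℤ) : Fin d → ℤ := fun i => ⌊(j i : ℝ) / 2 ^ L⌋

lemma idxOf_parent (d k L : ℕ) (x : EuclideanSpace ℝ (Fin d)) :
    idxOf d k x = paIdx d L (idxOf d (k + L) x) := by
  funext i
  simp only [paIdx, idxOf]
  rw [floor_floor_div]
  congr 1
  rw [pow_add]
  field_simp

lemma fiber_subset_parent (d k L : ℕ) (j' : Fin d → ℤ) :
    idxOf d (k + L) ⁻¹' {j'} ⊆ idxOf d k ⁻¹' {paIdx d L j'} := by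
  intro x hx
  simp only [Set.mem_preimage, Set.mem_singleton_iff] at hx ⊢
  rw [idxOf_parent d k L x, hx]

/-- at most `2^{Ld}` children cubes meet a cell -/
lemma ncard_image_fiber_le (d k L : ℕ) (B : Set (EuclideanSpace ℝ (Fin d)))
    (j : Fin d → ℤ) :
    (idxOf d (k + L) '' (B ∩ idxOf d k ⁻¹' {j})).ncard ≤ 2 ^ (L * d) := by
  classical
  set T : Finset (Fin d → ℤ) :=
    Fintype.piFinset fun i => Finset.Ico (2 ^ L * j i) (2 ^ L * j i + 2 ^ L) with hT
  have hsub : idxOf d (k + L) '' (B ∩ idxOf d k ⁻¹' {j}) ⊆ (T : Set (Fin d → ℤ)) := by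
    rintro _ ⟨x, ⟨-, hxj⟩, rfl⟩
    simp only [Set.mem_preimage, Set.mem_singleton_iff] at hxj
    simp only [hT, Finset.coe_sort_coe, Finset.mem_coe, Fintype.mem_piFinset, Finset.mem_Ico]
    intro i
    have h1 : (j i : ℝ) ≤ 2 ^ k * x i := by
      rw [← hxj]; exact Int.floor_le _
    have h2 : 2 ^ k * x i < (j i : ℝ) + 1 := by
      rw [← hxj]
      have := Int.lt_floor_add_one ((2:ℝ) ^ k * x i)
      push_cast at this ⊢
      exact this
    constructor
    · apply Int.le_floor.2
      push_cast
      rw [pow_add]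
      calc ((2:ℝ)^L) * j i ≤ 2^L * (2^k * x i) := by
            apply mul_le_mul_of_nonneg_left h1 (by positivity)
        _ = 2^k * 2^L * x i := by ring
    · apply Int.floor_lt.2
      push_cast
      rw [pow_add]
      calc (2:ℝ)^k * 2^L * x i = 2^L * (2^k * x i) := by ring
        _ < 2^L * ((j i : ℝ) + 1) := by
            apply mul_lt_mul_of_pos_left h2 (by positivity)
        _ = 2^L * j i + 2^L := by ring
  calc (idxOf d (k + L) '' (B ∩ idxOf d k ⁻¹' {j})).ncard
      ≤ (T : Set (Fin d → ℤ)).ncard := Set.ncard_le_ncard hsub (T.finite_toSet)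
    _ = T.card := Set.ncard_coe_finset _
    _ = ∏ i : Fin d, (Finset.Ico (2 ^ L * j i) (2 ^ L * j i + 2 ^ L)).card := by
        rw [hT, Fintype.card_piFinset]
    _ = ∏ _i : Fin d, 2 ^ L := by
        apply Finset.prod_congr rfl
        intro i _
        rw [Int.card_Ico]
        have h4 : ((2:ℤ)^L) = ((2^L : ℕ) : ℤ) := by push_cast; ring
        rw [show 2 ^ L * j i + 2 ^ L - 2 ^ L * j i = (2:ℤ)^L by ring, h4, Int.toNat_natCast]
    _ = 2 ^ (L * d) := by
        rw [Finset.prod_const, Finset.card_univ, Fintype.card_fin, ← pow_mul]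

end Geometry

namespace UniformizationAux

open Set Finset

variable {α β : Type*}

/-- From a finite set one can select `n` of the heaviest elements, capturing at least
half of the total weight, provided `#K ≤ 2n`. -/
lemma half_subset [DecidableEq β] (K : Finset β) (w : β → ℕ) (n : ℕ)
    (h1 : n ≤ K.card) (h2 : K.card ≤ 2 * n) :
    ∃ K' ⊆ K, K'.card = n ∧ ∑ b ∈ K, w b ≤ 2 * ∑ b ∈ K', w b := by
  rcases Nat.eq_zero_or_pos n with rfl | hn
  · refine ⟨∅, Finset.empty_subset _, rfl, ?_⟩
    have : K = ∅ := Finset.card_eq_zero.1 (Nat.le_zero.1 h2)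
    simp [this]
  obtain ⟨K', hK'P, hmax⟩ :=
    Finset.exists_max_image (K.powersetCard n) (fun s => ∑ b ∈ s, w b)
      (Finset.powersetCard_nonempty.2 h1)
  obtain ⟨hK'sub, hK'card⟩ := Finset.mem_powersetCard.1 hK'P
  have hswap : ∀ a ∈ K \ K', ∀ b ∈ K', w a ≤ w b := by
    intro a ha b hb
    by_contra hab
    push_neg at hab
    have haK : a ∈ K := (Finset.mem_sdiff.1 ha).1
    have haK' : a ∉ K' := (Finset.mem_sdiff.1 ha).2
    set K'' := insert a (K'.erase b) with hK''
    have hsub'' : K'' ⊆ K := by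
      intro x hx
      rcases Finset.mem_insert.1 hx with rfl | hx
      · exact haK
      · exact hK'sub (Finset.mem_of_mem_erase hx)
    have hcard'' : K''.card = n := by
      rw [hK'', Finset.card_insert_of_notMem (fun h => haK' (Finset.mem_of_mem_erase h)),
        Finset.card_erase_of_mem hb, hK'card]
      omega
    have hmem'' : K'' ∈ K.powersetCard n := Finset.mem_powersetCard.2 ⟨hsub'', hcard''⟩
    have hsum : ∑ x ∈ K', w x < ∑ x ∈ K'', w x := by
      rw [hK'', Finset.sum_insert (fun h => haK' (Finset.mem_of_mem_erase h)),
        ← Finset.add_sum_erase _ w hb]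
      omega
    exact absurd (hmax K'' hmem'') (by omega)
  obtain ⟨b0, hb0, hb0min⟩ :=
    Finset.exists_min_image K' w ⟨_, Finset.card_pos.1 (hK'card ▸ hn) |>.choose_spec⟩
  have hA : ∑ b ∈ K \ K', w b ≤ (K \ K').card * w b0 := by
    calc ∑ b ∈ K \ K', w b ≤ (K \ K').card • w b0 :=
      Finset.sum_le_card_nsmul _ _ _ (fun a ha => hswap a ha b0 hb0)
    _ = (K \ K').card * w b0 := by simp
  have hB : K'.card * w b0 ≤ ∑ b ∈ K', w b := by
    calc K'.card * w b0 = K'.card • w b0 := by simp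
    _ ≤ ∑ b ∈ K', w b := Finset.card_nsmul_le_sum _ _ _ (fun a ha => hb0min a ha)
  have hcards : (K \ K').card ≤ K'.card := by
    rw [Finset.card_sdiff_of_subset hK'sub, hK'card]; omega
  have hsplit : ∑ b ∈ K, w b = ∑ b ∈ K \ K', w b + ∑ b ∈ K', w b := by
    rw [Finset.sum_sdiff hK'sub]
  refine ⟨K', hK'sub, hK'card, ?_⟩
  have : ∑ b ∈ K \ K', w b ≤ ∑ b ∈ K', w b := by
    calc ∑ b ∈ K \ K', w b ≤ (K \ K').card * w b0 := hA
      _ ≤ K'.card * w b0 := Nat.mul_le_mul_right _ hcards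
      _ ≤ ∑ b ∈ K', w b := hB
  omega

/-- Pruning a finite cell: find a subset supported on exactly `2^t` fibers of `f`,
with `t < M`, capturing at least half the points, and containing each fiber it meets
entirely. -/
lemma cell_prune [DecidableEq α] [DecidableEq β] (f : α → β) (C : Set α) (hC : C.Finite)
    (hne : C.Nonempty) (M : ℕ) (hM : 1 ≤ M) (hcard : (f '' C).ncard ≤ 2 ^ M) :
    ∃ D ⊆ C, D.Nonempty ∧ ∃ t < M, (f '' D).ncard = 2 ^ t ∧ C.ncard ≤ 2 * D.ncard ∧
      ∀ b : β, D ∩ f ⁻¹' {b} = ∅ ∨ D ∩ f ⁻¹' {b} = C ∩ f ⁻¹' {b} := by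
  classical
  set Cf := hC.toFinset with hCf
  have hCfC : (Cf : Set α) = C := hC.coe_toFinset
  set Kf := Cf.image f with hKf
  have himage : f '' C = (Kf : Set β) := by
    rw [hKf, Finset.coe_image, hCfC]
  set N := Kf.card with hN
  have hNcard : (f '' C).ncard = N := by rw [himage, Set.ncard_coe_finset]
  have hNpos : 1 ≤ N := by
    rw [hN, hKf]
    rcases hne with ⟨x, hx⟩
    exact Finset.card_pos.2 ⟨f x, Finset.mem_image_of_mem f (hC.mem_toFinset.2 hx)⟩
  have hNle : N ≤ 2 ^ M := hNcard ▸ hcard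
  set t := min (Nat.log 2 N) (M - 1) with ht
  have htM : t < M := by
    have := min_le_right (Nat.log 2 N) (M - 1)
    omega
  have h2t_le : 2 ^ t ≤ N := by
    calc 2 ^ t ≤ 2 ^ Nat.log 2 N := Nat.pow_le_pow_right (by norm_num) (min_le_left _ _)
      _ ≤ N := Nat.pow_log_le_self 2 (by omega)
  have hN_le : N ≤ 2 * 2 ^ t := by
    rcases le_or_gt (Nat.log 2 N) (M - 1) with h | h
    · have htt : t = Nat.log 2 N := by
        have := min_le_left (Nat.log 2 N) (M - 1)
        omega
      rw [htt]
      have h1 := Nat.lt_pow_succ_log_self (b := 2) (by norm_num) N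
      have h2 : 2 ^ (Nat.log 2 N + 1) = 2 * 2 ^ Nat.log 2 N := by ring
      omega
    · have htt : t = M - 1 := by
        have := min_le_left (Nat.log 2 N) (M - 1)
        have := min_le_right (Nat.log 2 N) (M - 1)
        omega
      calc N ≤ 2 ^ M := hNle
        _ = 2 * 2 ^ (M - 1) := by
            rw [← pow_succ']
            congr 1
            omega
        _ = 2 * 2 ^ t := by rw [htt]
  set w : β → ℕ := fun b => (Cf.filter (fun x => f x = b)).card with hw
  obtain ⟨K', hK'sub, hK'card, hK'sum⟩ := half_subset Kf w (2 ^ t) h2t_le hN_le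
  have hsumK : ∑ b ∈ Kf, w b = Cf.card :=
    (Finset.card_eq_sum_card_fiberwise (fun x hx => Finset.mem_image_of_mem f hx)).symm
  set D : Set α := C ∩ f ⁻¹' (K' : Set β) with hD
  have hDC : D ⊆ C := Set.inter_subset_left
  have hDfin : D.Finite := hC.subset hDC
  set Df := Cf.filter (fun x => f x ∈ K') with hDf
  have hDfD : (Df : Set α) = D := by
    ext x
    simp only [hDf, Finset.coe_filter, Set.mem_setOf_eq, hD, Set.mem_inter_iff,
      Set.mem_preimage, Finset.mem_coe]
    rw [hCf, hC.mem_toFinset]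
  have hDcard : D.ncard = ∑ b ∈ K', w b := by
    rw [← hDfD, Set.ncard_coe_finset]
    rw [Finset.card_eq_sum_card_fiberwise (s := Df) (t := K') (f := f)
      (fun x hx => (Finset.mem_filter.1 hx).2)]
    apply Finset.sum_congr rfl
    intro b hb
    congr 1
    ext x
    simp only [hDf, Finset.mem_filter, and_assoc]
    constructor
    · rintro ⟨h1, h2, h3⟩; exact ⟨h1, h3⟩
    · rintro ⟨h1, h3⟩; exact ⟨h1, h3 ▸ hb, h3⟩
  have hfibers : ∀ b ∈ K', (C ∩ f ⁻¹' {b}).Nonempty := by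
    intro b hb
    have : b ∈ Kf := hK'sub hb
    obtain ⟨x, hx, hfx⟩ := Finset.mem_image.1 this
    exact ⟨x, hC.mem_toFinset.1 hx, hfx⟩
  have hfD : f '' D = (K' : Set β) := by
    apply Set.Subset.antisymm
    · rintro _ ⟨x, ⟨hxC, hxK⟩, rfl⟩
      exact hxK
    · intro b hb
      obtain ⟨x, hxC, hfx⟩ := hfibers b hb
      exact ⟨x, ⟨hxC, by rw [Set.mem_preimage, hfx]; exact hb⟩, hfx⟩
  refine ⟨D, hDC, ?_, t, htM, ?_, ?_, ?_⟩
  · obtain ⟨b, hb⟩ := Finset.card_pos.1 (hK'card ▸ pow_pos (by norm_num : (0:ℕ) < 2) t : 0 < K'.card)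
    obtain ⟨x, hxC, hfx⟩ := hfibers b hb
    exact ⟨x, hxC, by rw [Set.mem_preimage, hfx]; exact hb⟩
  · rw [hfD, Set.ncard_coe_finset, hK'card]
  · have hCcard : C.ncard = Cf.card := by rw [← hCfC, Set.ncard_coe_finset]
    rw [hCcard, hDcard, ← hsumK]
    exact hK'sum
  · intro b
    by_cases hb : b ∈ K'
    · right
      rw [hD]
      ext x
      simp only [Set.mem_inter_iff, Set.mem_preimage, Set.mem_singleton_iff, Finset.mem_coe]
      constructor
      · rintro ⟨⟨h1, _⟩, h3⟩; exact ⟨h1, h3⟩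
      · rintro ⟨h1, h3⟩; exact ⟨⟨h1, h3 ▸ hb⟩, h3⟩
    · left
      rw [hD]
      ext x
      simp only [Set.mem_inter_iff, Set.mem_preimage, Set.mem_singleton_iff, Finset.mem_coe,
        Set.mem_empty_iff_false, iff_false]
      rintro ⟨⟨_, h2⟩, h3⟩
      exact hb (h3 ▸ h2)

/-- Pigeonhole over labels. -/
lemma pigeon {γ : Type*} [DecidableEq γ] (P : Finset γ) (g : γ → ℕ) (ℓ : γ → ℕ × ℕ)
    (T : Finset (ℕ × ℕ)) (hmap : ∀ j ∈ P, ℓ j ∈ T) (hTne : T.Nonempty) :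
    ∃ lab ∈ T, ∑ j ∈ P, g j ≤ T.card * ∑ j ∈ P.filter (fun j => ℓ j = lab), g j := by
  classical
  have hsplit : ∑ j ∈ P, g j = ∑ lab ∈ T, ∑ j ∈ P.filter (fun j => ℓ j = lab), g j :=
    (Finset.sum_fiberwise_of_maps_to hmap g).symm
  obtain ⟨lab, hlab, hmax⟩ :=
    Finset.exists_max_image T (fun lab => ∑ j ∈ P.filter (fun j => ℓ j = lab), g j) hTne
  refine ⟨lab, hlab, ?_⟩
  calc ∑ j ∈ P, g j = ∑ lab' ∈ T, ∑ j ∈ P.filter (fun j => ℓ j = lab'), g j := hsplit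
    _ ≤ T.card • ∑ j ∈ P.filter (fun j => ℓ j = lab), g j :=
        Finset.sum_le_card_nsmul _ _ _ (fun lab' h => hmax lab' h)
    _ = T.card * ∑ j ∈ P.filter (fun j => ℓ j = lab), g j := by simp

end UniformizationAux

section Step

open Set Finset UniformizationAux

/-- One level of uniformization: prune within cells of level `k` so that every surviving
cell has exactly `2^t` children at level `k+L` and the same `G`-value, losing a factor at
most `2LVd`, and keeping surviving children whole. -/
lemma step_lemma (d L V k : ℕ) (hLd : 1 ≤ L * d) (hV : 1 ≤ V)
    (G : Set (EuclideanSpace ℝ (Fin d)) → ℕ) (hGfin : (Set.range G).Finite)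
    (hGV : (Set.range G).ncard ≤ V)
    (B : Set (EuclideanSpace ℝ (Fin d))) (hB : B.Finite) (hne : B.Nonempty) :
    ∃ B' ⊆ B, B'.Nonempty ∧ ∃ t v : ℕ,
      (∀ j ∈ covIdx d k B',
        covNum d (k + L) (B' ∩ dyadicCube d k j) = 2 ^ t ∧
        G (discretize d L (renorm d k j '' (B' ∩ dyadicCube d k j))) = v) ∧
      B.ncard ≤ 2 * L * V * d * B'.ncard ∧
      ∀ j', B' ∩ dyadicCube d (k + L) j' = ∅ ∨
        B' ∩ dyadicCube d (k + L) j' = B ∩ dyadicCube d (k + L) j' := by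
  classical
  set f := idxOf d k with hf
  set f' := idxOf d (k + L) with hf'
  set P : Set (Fin d → ℤ) := f '' B with hP
  have hPfin : P.Finite := hB.image _
  set Pf := hPfin.toFinset with hPf
  -- choice of pruned subcell in each cell
  have key : ∀ j : Fin d → ℤ, ∃ Dt : Set (EuclideanSpace ℝ (Fin d)) × ℕ,
      Dt.1 ⊆ B ∩ f ⁻¹' {j} ∧ (j ∈ P →
        Dt.1.Nonempty ∧ Dt.2 < L * d ∧
        (f' '' Dt.1).ncard = 2 ^ Dt.2 ∧ (B ∩ f ⁻¹' {j}).ncard ≤ 2 * Dt.1.ncard ∧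
        ∀ b, Dt.1 ∩ f' ⁻¹' {b} = ∅ ∨
          Dt.1 ∩ f' ⁻¹' {b} = (B ∩ f ⁻¹' {j}) ∩ f' ⁻¹' {b}) := by
    intro j
    by_cases hj : j ∈ P
    · obtain ⟨x, hxB, hxj⟩ := hj
      have hcne : (B ∩ f ⁻¹' {j}).Nonempty := ⟨x, hxB, by simp [hxj]⟩
      obtain ⟨D, hDC, hDne, t, htM, hDim, hDcard, hDfib⟩ :=
        cell_prune f' (B ∩ f ⁻¹' {j}) (hB.subset Set.inter_subset_left) hcne (L * d) hLd
          (ncard_image_fiber_le d k L B j)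
      exact ⟨(D, t), hDC, fun _ => ⟨hDne, htM, hDim, hDcard, hDfib⟩⟩
    · exact ⟨(∅, 0), Set.empty_subset _, fun h => absurd h hj⟩
  choose Dt hDtsub hDt using key
  set D : (Fin d → ℤ) → Set (EuclideanSpace ℝ (Fin d)) := fun j => (Dt j).1 with hD
  have hDfin : ∀ j, (D j).Finite := fun j => hB.subset ((hDtsub j).trans Set.inter_subset_left)
  have hDB : ∀ j, D j ⊆ B := fun j => (hDtsub j).trans Set.inter_subset_left
  have hDfibj : ∀ j, D j ⊆ f ⁻¹' {j} := fun j => (hDtsub j).trans Set.inter_subset_right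
  set ℓ : (Fin d → ℤ) → ℕ × ℕ :=
    fun j => ((Dt j).2, G (discretize d L (renorm d k j '' D j))) with hl
  set T : Finset (ℕ × ℕ) := (Finset.range (L * d)) ×ˢ hGfin.toFinset with hT
  have hmap : ∀ j ∈ Pf, ℓ j ∈ T := by
    intro j hj
    have hjP : j ∈ P := hPfin.mem_toFinset.1 hj
    refine Finset.mem_product.2 ⟨Finset.mem_range.2 (hDt j hjP).2.1, ?_⟩
    exact hGfin.mem_toFinset.2 ⟨_, rfl⟩
  have hPfne : Pf.Nonempty := by
    obtain ⟨x, hx⟩ := hne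
    exact ⟨f x, hPfin.mem_toFinset.2 ⟨x, hx, rfl⟩⟩
  obtain ⟨lab, hlabT, hpig⟩ :=
    pigeon Pf (fun j => (D j).ncard) ℓ T hmap ⟨ℓ hPfne.choose, hmap _ hPfne.choose_spec⟩
  set Pl := Pf.filter (fun j => ℓ j = lab) with hPl
  set B' : Set (EuclideanSpace ℝ (Fin d)) := ⋃ j ∈ Pl, D j with hB'
  have hmemP : ∀ j ∈ Pl, j ∈ P := fun j hj => hPfin.mem_toFinset.1 (Finset.mem_filter.1 hj).1
  have hB'B : B' ⊆ B := by
    rw [hB']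
    exact Set.iUnion₂_subset fun j _ => hDB j
  -- fibers of B' at level k
  have hfiber : ∀ j0, B' ∩ f ⁻¹' {j0} = if j0 ∈ Pl then D j0 else ∅ := by
    intro j0
    ext x
    simp only [hB', Set.mem_inter_iff, Set.mem_iUnion, Set.mem_preimage,
      Set.mem_singleton_iff, exists_prop]
    constructor
    · rintro ⟨⟨j, hjPl, hxD⟩, hfx⟩
      have : f x = j := hDfibj j hxD
      have hjj0 : j = j0 := by rw [← this, hfx]
      subst hjj0
      simp [hjPl, hxD]
    · intro hx
      by_cases h0 : j0 ∈ Pl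
      · simp only [h0, if_true] at hx
        exact ⟨⟨j0, h0, hx⟩, hDfibj j0 hx⟩
      · simp [h0] at hx
  have hcell : ∀ j ∈ Pl, B' ∩ f ⁻¹' {j} = D j := by
    intro j hj; rw [hfiber j, if_pos hj]
  have hcovIdx : ∀ j0, j0 ∈ covIdx d k B' ↔ j0 ∈ Pl := by
    intro j0
    rw [mem_covIdx, ← hf, hfiber j0]
    by_cases h0 : j0 ∈ Pl
    · simp only [h0, if_true, iff_true]
      exact (hDt j0 (hmemP j0 h0)).1
    · simp [h0]
  -- cardinality of B'
  set Df : (Fin d → ℤ) → Finset (EuclideanSpace ℝ (Fin d)) := fun j => (hDfin j).toFinset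
    with hDff
  have hB'f : B' = (Pl.biUnion Df : Set (EuclideanSpace ℝ (Fin d))) := by
    rw [Finset.coe_biUnion, hB']
    apply Set.iUnion₂_congr
    intro j hj
    rw [hDff]
    exact ((hDfin j).coe_toFinset).symm
  have hdisj : ∀ j1 ∈ Pl, ∀ j2 ∈ Pl, j1 ≠ j2 → Disjoint (Df j1) (Df j2) := by
    intro j1 _ j2 _ hne12
    rw [Finset.disjoint_left]
    intro x hx1 hx2
    rw [hDff, Set.Finite.mem_toFinset] at hx1 hx2
    exact hne12 ((hDfibj j1 hx1).symm.trans (hDfibj j2 hx2))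
  have hB'card : B'.ncard = ∑ j ∈ Pl, (D j).ncard := by
    rw [hB'f, Set.ncard_coe_finset, Finset.card_biUnion hdisj]
    apply Finset.sum_congr rfl
    intro j _
    rw [hDff, Set.ncard_eq_toFinset_card _ (hDfin j)]
  -- cardinality of B
  set Bf := hB.toFinset with hBf
  have hfibcard : ∀ j, (B ∩ f ⁻¹' {j}).ncard = (Bf.filter (fun x => f x = j)).card := by
    intro j
    rw [← Set.ncard_coe_finset]
    congr 1
    ext x
    simp only [Finset.coe_filter, Set.mem_setOf_eq, Set.mem_inter_iff, Set.mem_preimage,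
      Set.mem_singleton_iff, hBf, hB.mem_toFinset]
  have hBcard : B.ncard = ∑ j ∈ Pf, (B ∩ f ⁻¹' {j}).ncard := by
    have hmapsto : ∀ x ∈ Bf, f x ∈ Pf := by
      intro x hx
      exact hPfin.mem_toFinset.2 ⟨x, hB.mem_toFinset.1 hx, rfl⟩
    rw [show B.ncard = Bf.card by rw [hBf, Set.ncard_eq_toFinset_card _ hB],
      Finset.card_eq_sum_card_fiberwise hmapsto]
    exact Finset.sum_congr rfl fun j _ => (hfibcard j).symm
  have hBle : B.ncard ≤ 2 * ∑ j ∈ Pf, (D j).ncard := by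
    rw [hBcard, Finset.mul_sum]
    apply Finset.sum_le_sum
    intro j hj
    exact (hDt j (hPfin.mem_toFinset.1 hj)).2.2.2.1
  have hTcard : T.card ≤ L * d * V := by
    rw [hT, Finset.card_product, Finset.card_range]
    apply Nat.mul_le_mul_left
    rw [← Set.ncard_eq_toFinset_card _ hGfin]
    exact hGV
  have hmain : B.ncard ≤ 2 * L * V * d * B'.ncard := by
    calc B.ncard ≤ 2 * ∑ j ∈ Pf, (D j).ncard := hBle
      _ ≤ 2 * (T.card * ∑ j ∈ Pl, (D j).ncard) := by
          apply Nat.mul_le_mul_left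
          exact hpig
      _ = 2 * T.card * B'.ncard := by rw [hB'card]; ring
      _ ≤ 2 * (L * d * V) * B'.ncard := by
          apply Nat.mul_le_mul_right
          exact Nat.mul_le_mul_left _ hTcard
      _ = 2 * L * V * d * B'.ncard := by ring
  have hB'ne : B'.Nonempty := by
    have hBpos : 0 < B.ncard := (Set.ncard_pos hB).2 hne
    apply Set.nonempty_of_ncard_ne_zero
    intro h
    rw [h, Nat.mul_zero] at hmain
    omega
  refine ⟨B', hB'B, hB'ne, lab.1, lab.2, ?_, hmain, ?_⟩
  · intro j hj
    have hjPl : j ∈ Pl := (hcovIdx j).1 hj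
    have hlab := (Finset.mem_filter.1 hjPl).2
    have hcellj : B' ∩ dyadicCube d k j = D j := by
      rw [inter_cube, ← hf, hcell j hjPl]
    constructor
    · rw [hcellj, covNum_eq, ← hf']
      rw [(hDt j (hmemP j hjPl)).2.2.1]
      have : (Dt j).2 = lab.1 := by
        rw [← hlab]
      rw [this]
    · rw [hcellj]
      have : G (discretize d L (renorm d k j '' D j)) = lab.2 := by
        rw [← hlab]
      exact this
  · intro j'
    rw [inter_cube, inter_cube, ← hf']
    set pa := paIdx d L j' with hpa
    have hsub : f' ⁻¹' {j'} ⊆ f ⁻¹' {pa} := by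
      rw [hf, hf', hpa]
      exact fiber_subset_parent d k L j'
    have hsplit : B' ∩ f' ⁻¹' {j'} = (B' ∩ f ⁻¹' {pa}) ∩ f' ⁻¹' {j'} := by
      ext x
      simp only [Set.mem_inter_iff]
      constructor
      · rintro ⟨h1, h2⟩; exact ⟨⟨h1, hsub h2⟩, h2⟩
      · rintro ⟨⟨h1, _⟩, h2⟩; exact ⟨h1, h2⟩
    rw [hsplit, hfiber pa]
    by_cases h0 : pa ∈ Pl
    · rw [if_pos h0]
      rcases (hDt pa (hmemP pa h0)).2.2.2.2 j' with h | h
      · left; exact h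
      · right
        rw [h]
        ext x
        simp only [Set.mem_inter_iff, Set.mem_preimage, Set.mem_singleton_iff]
        constructor
        · rintro ⟨⟨h1, _⟩, h2⟩; exact ⟨h1, h2⟩
        · rintro ⟨h1, h2⟩
          exact ⟨⟨h1, by have := hsub (show x ∈ f' ⁻¹' {j'} from h2); exact this⟩, h2⟩
    · rw [if_neg h0]
      left
      simp

end Step

section Core

open Set Finset

lemma core_lemma (d L V : ℕ) (hLd : 1 ≤ L * d) (hV : 1 ≤ V)
    (F : ℕ → Set (EuclideanSpace ℝ (Fin d)) → ℕ) :
    ∀ S : ℕ, (∀ s < S, (Set.range (F s)).Finite ∧ (Set.range (F s)).ncard ≤ V) →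
    ∀ B : Set (EuclideanSpace ℝ (Fin d)), B.Finite → B.Nonempty →
    ∃ A ⊆ B, A.Nonempty ∧ ∃ R : ℕ → ℕ, IsUniform d L S R A ∧
      B.ncard ≤ (2 * L * V * d) ^ S * A.ncard ∧
      (∀ s < S, ∃ v, ∀ j ∈ covIdx d (s * L) A,
        F s (discretize d L (renorm d (s * L) j '' (A ∩ dyadicCube d (s * L) j))) = v) ∧
      (∀ j', A ∩ dyadicCube d (S * L) j' = ∅ ∨
        A ∩ dyadicCube d (S * L) j' = B ∩ dyadicCube d (S * L) j') := by
  intro S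
  induction S with
  | zero =>
    intro _ B hB hne
    refine ⟨B, Set.Subset.rfl, hne, fun _ => 0, ?_, ?_, ?_, fun j' => Or.inr rfl⟩
    · intro s hs; omega
    · simp
    · intro s hs; omega
  | succ n ih =>
    intro hF B hB hne
    obtain ⟨B', hB'B, hB'ne, t, v, hcells, hcard, hpres⟩ :=
      step_lemma d L V (n * L) hLd hV (F n) (hF n (Nat.lt_succ_self n)).1
        (hF n (Nat.lt_succ_self n)).2 B hB hne
    obtain ⟨A, hAB', hAne, R, hunif, hAcard, hconst, hApres⟩ :=
      ih (fun s hs => hF s (hs.trans (Nat.lt_succ_self n))) B' (hB.subset hB'B) hB'ne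
    have hmul : (n + 1) * L = n * L + L := by ring
    refine ⟨A, hAB'.trans hB'B, hAne, fun s => if s = n then 2 ^ t else R s, ?_, ?_, ?_, ?_⟩
    · -- uniformity
      intro s hs j hj
      by_cases hsS : s = n
      · subst hsS
        simp only [if_pos rfl]
        rcases hApres j with h | h
        · exact absurd hj (by rw [mem_covIdx, ← inter_cube, h]; exact not_nonempty_empty)
        · have hjB' : j ∈ covIdx d (s * L) B' := by
            rw [covIdx, Set.mem_setOf_eq, ← h]
            exact hj
          rw [h, hmul]
          exact (hcells j hjB').1
      · have hsS' : s < n := by omega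
        simp only [if_neg hsS]
        exact hunif s hsS' j hj
    · -- cardinality
      calc B.ncard ≤ 2 * L * V * d * B'.ncard := hcard
        _ ≤ 2 * L * V * d * ((2 * L * V * d) ^ n * A.ncard) :=
            Nat.mul_le_mul_left _ hAcard
        _ = (2 * L * V * d) ^ (n + 1) * A.ncard := by ring
    · -- constancy
      intro s hs
      by_cases hsS : s = n
      · subst hsS
        refine ⟨v, ?_⟩
        intro j hj
        rcases hApres j with h | h
        · exact absurd hj (by rw [mem_covIdx, ← inter_cube, h]; exact not_nonempty_empty)
        · have hjB' : j ∈ covIdx d (s * L) B' := by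
            rw [covIdx, Set.mem_setOf_eq, ← h]
            exact hj
          rw [h]
          exact (hcells j hjB').2
      · exact hconst s (by omega)
    · -- preservation at level (n+1)*L
      intro j'
      rw [hmul, inter_cube, inter_cube]
      set pa := paIdx d L j' with hpa
      have hsub := fiber_subset_parent d (n * L) L j'
      have hsplitA : A ∩ idxOf d (n * L + L) ⁻¹' {j'} =
          (A ∩ idxOf d (n * L) ⁻¹' {pa}) ∩ idxOf d (n * L + L) ⁻¹' {j'} := by
        ext x
        simp only [Set.mem_inter_iff]
        constructor
        · rintro ⟨h1, h2⟩; exact ⟨⟨h1, hsub h2⟩, h2⟩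
        · rintro ⟨⟨h1, _⟩, h2⟩; exact ⟨h1, h2⟩
      rw [hsplitA]
      have hApres' := hApres pa
      rw [inter_cube, inter_cube] at hApres'
      rcases hApres' with h | h
      · left; rw [h]; simp
      · rw [h]
        have hBsplit : (B' ∩ idxOf d (n * L) ⁻¹' {pa}) ∩ idxOf d (n * L + L) ⁻¹' {j'} =
            B' ∩ idxOf d (n * L + L) ⁻¹' {j'} := by
          ext x
          simp only [Set.mem_inter_iff]
          constructor
          · rintro ⟨⟨h1, _⟩, h2⟩; exact ⟨h1, h2⟩
          · rintro ⟨h1, h2⟩; exact ⟨⟨h1, hsub h2⟩, h2⟩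
        rw [hBsplit]
        have := hpres j'
        rw [inter_cube, inter_cube] at this
        exact this

end Core

section Main

open Set Finset

lemma finite_of_dyadicSet {d m : ℕ} {A : Set (EuclideanSpace ℝ (Fin d))}
    (hA : IsDyadicSet d m A) : A.Finite := by
  classical
  obtain ⟨hsub, hdy⟩ := hA
  have hcoord : ∀ x ∈ A, ∀ i, (x : Fin d → ℝ) i = (idxOf d m x i : ℝ) / 2 ^ m := by
    intro x hx i
    obtain ⟨n, hn⟩ := hdy x hx i
    have h2 : (2:ℝ) ^ m ≠ 0 := by positivity
    have : idxOf d m x i = n := by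
      rw [idxOf, hn]
      rw [show (2:ℝ) ^ m * ((n:ℝ) / 2 ^ m) = (n:ℝ) by field_simp]
      exact Int.floor_intCast n
    rw [this, ← hn]
  have hinj : Set.InjOn (idxOf d m) A := by
    intro x hx y hy hxy
    have : (x : Fin d → ℝ) = (y : Fin d → ℝ) := by
      funext i
      rw [hcoord x hx i, hcoord y hy i, hxy]
    exact WithLp.ofLp_injective 2 this
  have himfin : (idxOf d m '' A).Finite := by
    apply Set.Finite.subset
      ((Fintype.piFinset fun _ : Fin d => Finset.Ico (0:ℤ) (2 ^ m)).finite_toSet)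
    rintro _ ⟨x, hx, rfl⟩
    simp only [Finset.coe_sort_coe, Finset.mem_coe, Fintype.mem_piFinset, Finset.mem_Ico]
    intro i
    have h1 : (0:ℝ) ≤ x i := (hsub hx i).1
    have h2 : x i < 1 := (hsub hx i).2
    constructor
    · apply Int.le_floor.2
      push_cast
      positivity
    · apply Int.floor_lt.2
      push_cast
      calc (2:ℝ) ^ m * x i < 2 ^ m * 1 := by
            apply mul_lt_mul_of_pos_left h2 (by positivity)
        _ = 2 ^ m := by ring
  exact Set.Finite.of_finite_image himfin hinj

lemma singleton_uniform (d L S : ℕ) (x : EuclideanSpace ℝ (Fin d)) :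
    IsUniform d L S (fun _ => 1) {x} := by
  intro s hs j hj
  rw [mem_covIdx] at hj
  obtain ⟨y, hy, hyj⟩ := hj
  rw [Set.mem_singleton_iff] at hy
  rw [Set.mem_preimage, Set.mem_singleton_iff] at hyj
  rw [hy] at hyj
  have hsx : ({x} : Set (EuclideanSpace ℝ (Fin d))) ∩ dyadicCube d (s * L) j = {x} := by
    apply Set.inter_eq_self_of_subset_left
    rw [Set.singleton_subset_iff, dyadicCube_eq_fiber]
    simp only [Set.mem_preimage, Set.mem_singleton_iff]
    exact hyj
  rw [hsx, covNum_eq, Set.image_singleton, Set.ncard_singleton]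

theorem exists_uniform_subset_constant_functions' (d L S V : ℕ)
    (F : ℕ → Set (EuclideanSpace ℝ (Fin d)) → ℕ)
    (hF : ∀ s < S, (Set.range (F s)).Finite ∧ (Set.range (F s)).ncard ≤ V)
    (A₀ : Set (EuclideanSpace ℝ (Fin d))) (hA₀ : IsDyadicSet d (L * S) A₀)
    (hne : A₀.Nonempty) :
    ∃ A ⊆ A₀, ∃ R : ℕ → ℕ, IsUniform d L S R A ∧
      (A.ncard : ℝ) ≥ ((2 * L * V * d : ℝ))⁻¹ ^ S * A₀.ncard ∧
      ∀ s < S, ∃ v : ℕ, ∀ j ∈ covIdx d (s * L) A,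
        F s (discretize d L (renorm d (s * L) j '' (A ∩ dyadicCube d (s * L) j))) = v := by
  classical
  have hA₀fin : A₀.Finite := finite_of_dyadicSet hA₀
  rcases Nat.eq_zero_or_pos S with hS | hS
  · subst hS
    refine ⟨A₀, Set.Subset.rfl, fun _ => 0, ?_, ?_, ?_⟩
    · intro s hs; omega
    · simp
    · intro s hs; omega
  rcases Nat.eq_zero_or_pos V with hV | hV
  · exfalso
    obtain ⟨hfin, hle⟩ := hF 0 hS
    have : (Set.range (F 0)).ncard = 0 := by omega
    have hr : Set.range (F 0) = ∅ := (Set.ncard_eq_zero hfin).1 this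
    exact absurd hr (Set.nonempty_iff_ne_empty.1 ⟨F 0 ∅, ∅, rfl⟩)
  rcases Nat.eq_zero_or_pos (L * d) with hLd | hLd
  · -- degenerate: the bound is zero, a singleton works
    obtain ⟨x, hx⟩ := hne
    have hLd' : L = 0 ∨ d = 0 := by
      rcases Nat.mul_eq_zero.1 hLd with h | h
      · exact Or.inl h
      · exact Or.inr h
    have hzero : ((2 * L * V * d : ℝ)) = 0 := by
      rcases hLd' with h | h <;> simp [h]
    refine ⟨{x}, Set.singleton_subset_iff.2 hx, fun _ => 1, singleton_uniform d L S x, ?_, ?_⟩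
    · rw [hzero, inv_zero, zero_pow (by omega : S ≠ 0), zero_mul]
      positivity
    · intro s hs
      refine ⟨F s (discretize d L (renorm d (s * L) (idxOf d (s * L) x) ''
        (({x} : Set (EuclideanSpace ℝ (Fin d))) ∩ dyadicCube d (s * L) (idxOf d (s * L) x)))), ?_⟩
      intro j hj
      rw [mem_covIdx] at hj
      obtain ⟨y, hy, hyj⟩ := hj
      rw [Set.mem_singleton_iff] at hy
      rw [Set.mem_preimage, Set.mem_singleton_iff] at hyj
      rw [hy] at hyj
      rw [← hyj]
  · -- main case
    obtain ⟨A, hAB, hAne, R, hunif, hcard, hconst, _⟩ :=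
      core_lemma d L V hLd hV F S hF A₀ hA₀fin hne
    refine ⟨A, hAB, R, hunif, ?_, hconst⟩
    have hpos : (0:ℝ) < (2 * L * V * d : ℝ) := by
      have hL : 1 ≤ L := by
        by_contra h
        push_neg at h
        interval_cases L <;> omega
      have hd : 1 ≤ d := by
        by_contra h
        push_neg at h
        interval_cases d <;> omega
      have h1 : (0:ℝ) < L := by exact_mod_cast hL
      have h2 : (0:ℝ) < V := by exact_mod_cast hV
      have h3 : (0:ℝ) < d := by exact_mod_cast hd
      exact mul_pos (mul_pos (mul_pos two_pos h1) h2) h3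
    have hcast : (A₀.ncard : ℝ) ≤ (2 * L * V * d : ℝ) ^ S * A.ncard := by
      have := hcard
      have h2 : ((((2 * L * V * d) ^ S * A.ncard : ℕ)) : ℝ) = (2 * L * V * d : ℝ) ^ S * A.ncard := by
        push_cast
        ring
      calc (A₀.ncard : ℝ) ≤ (((2 * L * V * d) ^ S * A.ncard : ℕ) : ℝ) := by exact_mod_cast this
        _ = _ := h2
    rw [ge_iff_le, inv_pow, inv_mul_le_iff₀ (by positivity)]
    exact hcast

end Main


/-- **Uniformization with prescribed functions**: if `(F_s)_{s<S}` are functions of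
`2^{-L}`-sets each taking at most `V` values, then any nonempty `2^{-LS}`-set `A₀` has an
`(L,S)`-uniform subset `A` with `|A| ≥ (2LVd)^{-S}|A₀|` on which, at each level `s`, the
value `F_s(A^I_L)` is the same for all dyadic cubes `I ∈ D_{sL}` meeting `A`. -/
theorem exists_uniform_subset_constant_functions (d L S V : ℕ)
    (F : ℕ → Set (EuclideanSpace ℝ (Fin d)) → ℕ)
    (hF : ∀ s < S, (Set.range (F s)).Finite ∧ (Set.range (F s)).ncard ≤ V)
    (A₀ : Set (EuclideanSpace ℝ (Fin d))) (hA₀ : IsDyadicSet d (L * S) A₀)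
    (hne : A₀.Nonempty) :
    ∃ A ⊆ A₀, ∃ R : ℕ → ℕ, IsUniform d L S R A ∧
      (A.ncard : ℝ) ≥ ((2 * L * V * d : ℝ))⁻¹ ^ S * A₀.ncard ∧
      ∀ s < S, ∃ v : ℕ, ∀ j ∈ covIdx d (s * L) A,
        F s (discretize d L (renorm d (s * L) j '' (A ∩ dyadicCube d (s * L) j))) = v := by
  exact exists_uniform_subset_constant_functions' d L S V F hF A₀ hA₀ hne
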